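/- For every x ∈ ℝ, the sequence (1/n) log ℙ(X̄ₙ ≥ x) converges in [-∞, 0] to s(x) = sup_{n≥1} (1/n) log ℙ(X̄ₙ ≥ x). -/

import Mathlib

open MeasureTheory ProbabilityTheory Filter Topology

/-- Empirical mean of the first `n` variables. -/
noncomputable def empMean {Ω : Type*} (X : ℕ → Ω → ℝ) (n : ℕ) (ω : Ω) : ℝ :=
  (∑ i ∈ Finset.range n, X i ω) / n

/-- The entropy `s(x) = sup_{n ≥ 1} (1/n) log ℙ(X̄ₙ ≥ x)`, with values in `[-∞, 0]`. -/
noncomputable def entropy {Ω : Type*} [MeasurableSpace Ω] (μ : Measure Ω)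
    (X : ℕ → Ω → ℝ) (x : ℝ) : EReal :=
  ⨆ n : ℕ, ⨆ _ : 1 ≤ n, (((n : ℝ)⁻¹ : ℝ) : EReal) *
    ENNReal.log (μ {ω | x ≤ empMean X n ω})

/-- The pressure `p(λ) = log 𝔼(e^{λ X₁})`, with values in `(-∞, ∞]`. -/
noncomputable def pressure {Ω : Type*} [MeasurableSpace Ω] (μ : Measure Ω)
    (X : ℕ → Ω → ℝ) (l : ℝ) : EReal :=
  ENNReal.log (∫⁻ ω, ENNReal.ofReal (Real.exp (l * X 0 ω)) ∂μ)

section Aux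

variable {Ω : Type*} [MeasurableSpace Ω] {μ : Measure Ω} [IsProbabilityMeasure μ]

lemma block_ident (X : ℕ → Ω → ℝ) (hmeas : ∀ i, Measurable (X i))
    (hindep : iIndepFun X μ)
    (hident : ∀ i, IdentDistrib (X i) (X 0) μ μ) (n : ℕ) :
    ∀ m : ℕ, IdentDistrib (∑ i ∈ Finset.Ico n (n + m), X i)
      (∑ i ∈ Finset.range m, X i) μ μ := by
  intro m
  induction m with
  | zero =>
      simp only [Finset.Ico_self, Finset.sum_empty, Finset.range_zero, Nat.add_zero]
      exact IdentDistrib.refl aemeasurable_const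
  | succ m ih =>
      have hS : IndepFun (∑ i ∈ Finset.Ico n (n + m), X i) (X (n + m)) μ :=
        hindep.indepFun_finsetSum_of_notMem hmeas (by simp)
      have hT : IndepFun (∑ i ∈ Finset.range m, X i) (X m) μ :=
        hindep.indepFun_finsetSum_of_notMem hmeas (by simp)
      have hXm : IdentDistrib (X (n + m)) (X m) μ μ := (hident (n + m)).trans (hident m).symm
      have hmS : AEMeasurable (∑ i ∈ Finset.Ico n (n + m), X i) μ := by
        rw [Finset.sum_fn]
        exact (Finset.measurable_sum _ fun i _ => hmeas i).aemeasurable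
      have hmT : AEMeasurable (∑ i ∈ Finset.range m, X i) μ := by
        rw [Finset.sum_fn]
        exact (Finset.measurable_sum _ fun i _ => hmeas i).aemeasurable
      have hpair : IdentDistrib
          (fun ω => ((∑ i ∈ Finset.Ico n (n + m), X i) ω, X (n + m) ω))
          (fun ω => ((∑ i ∈ Finset.range m, X i) ω, X m ω)) μ μ := by
        refine ⟨hmS.prodMk (hmeas (n + m)).aemeasurable,
          hmT.prodMk (hmeas m).aemeasurable, ?_⟩
        rw [(indepFun_iff_map_prod_eq_prod_map_map hmS (hmeas (n + m)).aemeasurable).1 hS,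
          (indepFun_iff_map_prod_eq_prod_map_map hmT (hmeas m).aemeasurable).1 hT,
          ih.map_eq, hXm.map_eq]
      have := hpair.comp (show Measurable (fun p : ℝ × ℝ => p.1 + p.2) from measurable_fst.add measurable_snd)
      have heq1 : (fun p : ℝ × ℝ => p.1 + p.2) ∘
          (fun ω => ((∑ i ∈ Finset.Ico n (n + m), X i) ω, X (n + m) ω)) =
          ∑ i ∈ Finset.Ico n (n + m + 1), X i := by
        funext ω
        simp [Finset.sum_Ico_succ_top (Nat.le_add_right n m), Function.comp]
      have heq2 : (fun p : ℝ × ℝ => p.1 + p.2) ∘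
          (fun ω => ((∑ i ∈ Finset.range m, X i) ω, X m ω)) =
          ∑ i ∈ Finset.range (m + 1), X i := by
        funext ω
        simp [Finset.sum_range_succ, Function.comp]
      rw [heq1, heq2] at this
      exact this

lemma block_indep (X : ℕ → Ω → ℝ) (hmeas : ∀ i, Measurable (X i))
    (hindep : iIndepFun X μ) (n m : ℕ) :
    IndepFun (∑ i ∈ Finset.range n, X i) (∑ i ∈ Finset.Ico n (n + m), X i) μ := by
  have h := hindep.indepFun_finset (Finset.range n) (Finset.Ico n (n + m))
    (by simp [Finset.disjoint_left]; omega) hmeas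
  have g1 : Measurable (fun v : {x // x ∈ Finset.range n} → ℝ => ∑ i, v i) :=
    Finset.measurable_sum _ fun i _ => measurable_pi_apply i
  have g2 : Measurable (fun v : {x // x ∈ Finset.Ico n (n + m)} → ℝ => ∑ i, v i) :=
    Finset.measurable_sum _ fun i _ => measurable_pi_apply i
  have h2 := h.comp g1 g2
  have e1 : ((fun v : {x // x ∈ Finset.range n} → ℝ => ∑ i, v i) ∘
      fun a (i : {x // x ∈ Finset.range n}) => X i a) = ∑ i ∈ Finset.range n, X i := by
    funext a
    simp only [Function.comp, Finset.sum_apply]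
    exact Finset.sum_coe_sort (Finset.range n) (fun i => X i a)
  have e2 : ((fun v : {x // x ∈ Finset.Ico n (n + m)} → ℝ => ∑ i, v i) ∘
      fun a (i : {x // x ∈ Finset.Ico n (n + m)}) => X i a) = ∑ i ∈ Finset.Ico n (n + m), X i := by
    funext a
    simp only [Function.comp, Finset.sum_apply]
    exact Finset.sum_coe_sort (Finset.Ico n (n + m)) (fun i => X i a)
  rwa [e1, e2] at h2

lemma q_superadd (X : ℕ → Ω → ℝ) (hmeas : ∀ i, Measurable (X i))
    (hindep : iIndepFun X μ)
    (hident : ∀ i, IdentDistrib (X i) (X 0) μ μ) (x : ℝ) (n m : ℕ) :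
    μ ((∑ i ∈ Finset.range n, X i) ⁻¹' Set.Ici (x * n)) *
      μ ((∑ i ∈ Finset.range m, X i) ⁻¹' Set.Ici (x * m)) ≤
    μ ((∑ i ∈ Finset.range (n + m), X i) ⁻¹' Set.Ici (x * (n + m))) := by
  have hB : μ ((∑ i ∈ Finset.Ico n (n + m), X i) ⁻¹' Set.Ici (x * m)) =
      μ ((∑ i ∈ Finset.range m, X i) ⁻¹' Set.Ici (x * m)) :=
    (block_ident X hmeas hindep hident n m).measure_mem_eq measurableSet_Ici
  rw [← hB,
    ← (block_indep X hmeas hindep n m).measure_inter_preimage_eq_mul _ _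
      measurableSet_Ici measurableSet_Ici]
  apply measure_mono
  intro ω hω
  obtain ⟨h1, h2⟩ := hω
  simp only [Set.mem_preimage, Set.mem_Ici, Finset.sum_apply] at h1 h2 ⊢
  have : ∑ i ∈ Finset.range n, X i ω + ∑ i ∈ Finset.Ico n (n + m), X i ω =
      ∑ i ∈ Finset.range (n + m), X i ω := by
    simp only [Finset.range_eq_Ico]
    exact Finset.sum_Ico_consecutive _ (Nat.zero_le n) (Nat.le_add_right n m)
  push_cast
  rw [mul_add]
  linarith

end Aux

theorem convergence_to_entropy {Ω : Type*} [MeasurableSpace Ω] (μ : Measure Ω) [IsProbabilityMeasure μ]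
    (X : ℕ → Ω → ℝ) (hmeas : ∀ i, Measurable (X i))
    (hindep : iIndepFun X μ)
    (hident : ∀ i, IdentDistrib (X i) (X 0) μ μ) (x : ℝ) :
    Tendsto (fun n : ℕ => (((n : ℝ)⁻¹ : ℝ) : EReal) *
        ENNReal.log (μ {ω | x ≤ empMean X n ω})) atTop (𝓝 (entropy μ X x)) := by
  set q : ℕ → ENNReal := fun k => μ ((∑ i ∈ Finset.range k, X i) ⁻¹' Set.Ici (x * k)) with hq
  have hset : ∀ k : ℕ, 1 ≤ k →
      {ω | x ≤ empMean X k ω} = (∑ i ∈ Finset.range k, X i) ⁻¹' Set.Ici (x * k) := by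
    intro k hk
    have hkpos : (0 : ℝ) < k := by exact_mod_cast hk
    ext ω
    simp only [Set.mem_setOf_eq, Set.mem_preimage, Set.mem_Ici, Finset.sum_apply, empMean]
    exact le_div_iff₀ hkpos
  have hq1 : q 1 = μ ((X 0) ⁻¹' Set.Ici x) := by
    simp [hq, Finset.sum_range_one]
  by_cases h0 : q 1 = 0
  · -- degenerate case : everything is ⊥
    have hq0 : ∀ k : ℕ, 1 ≤ k → q k = 0 := by
      intro k hk
      have hsub : (∑ i ∈ Finset.range k, X i) ⁻¹' Set.Ici (x * k) ⊆
          ⋃ i ∈ Finset.range k, (X i) ⁻¹' Set.Ici x := by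
        intro ω hω
        simp only [Set.mem_preimage, Set.mem_Ici, Finset.sum_apply] at hω
        by_contra hc
        simp only [Set.mem_iUnion, Set.mem_preimage, Set.mem_Ici, not_exists] at hc
        push_neg at hc
        have hlt : ∑ i ∈ Finset.range k, X i ω < ∑ _i ∈ Finset.range k, x :=
          Finset.sum_lt_sum_of_nonempty (by rw [Finset.nonempty_range_iff]; omega) fun i hi => hc i hi
        rw [Finset.sum_const, Finset.card_range, nsmul_eq_mul] at hlt
        rw [mul_comm] at hlt
        linarith
      refine le_antisymm (le_trans (measure_mono hsub) ?_) zero_le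
      refine le_trans (measure_biUnion_finset_le _ _) ?_
      have : ∀ i ∈ Finset.range k, μ ((X i) ⁻¹' Set.Ici x) = 0 := by
        intro i _
        rw [(hident i).measure_mem_eq measurableSet_Ici, ← hq1]
        exact h0
      rw [Finset.sum_congr rfl this]
      simp
    have hbot : ∀ n : ℕ, 1 ≤ n → (((n : ℝ)⁻¹ : ℝ) : EReal) *
        ENNReal.log (μ {ω | x ≤ empMean X n ω}) = ⊥ := by
      intro n hn
      rw [hset n hn,
        show μ ((∑ i ∈ Finset.range n, X i) ⁻¹' Set.Ici (x * n)) = 0 from hq0 n hn]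
      simp only [ENNReal.log_zero]
      exact EReal.coe_mul_bot_of_pos (by positivity : (0:ℝ) < ((n : ℝ)⁻¹))
    have hent : entropy μ X x = ⊥ := by
      refine le_bot_iff.1 (iSup_le fun n => iSup_le fun hn => le_of_eq (hbot n hn))
    rw [hent]
    refine Tendsto.congr' ?_ (tendsto_const_nhds : Tendsto (fun _ : ℕ => (⊥ : EReal)) atTop (𝓝 ⊥))
    filter_upwards [eventually_ge_atTop 1] with n hn
    exact (hbot n hn).symm
  · -- nondegenerate case
    have hfin : ∀ k, q k ≠ ⊤ := fun k => measure_ne_top μ _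
    have hle1 : ∀ k, q k ≤ 1 := fun k => prob_le_one
    have hsuper : ∀ n m : ℕ, q n * q m ≤ q (n + m) := by
      intro n m
      have := q_superadd X hmeas hindep hident x n m
      rwa [← Nat.cast_add] at this
    have hpos : ∀ k : ℕ, 1 ≤ k → 0 < q k := by
      intro k hk
      induction k with
      | zero => omega
      | succ k ih =>
          rcases Nat.eq_zero_or_pos k with h | h
          · subst h
            exact pos_iff_ne_zero.2 h0
          · exact lt_of_lt_of_le (ENNReal.mul_pos (ih h).ne' h0) (hsuper k 1)
    set p : ℕ → ℝ := fun k => (q k).toReal with hp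
    have hppos : ∀ k : ℕ, 1 ≤ k → 0 < p k := fun k hk =>
      ENNReal.toReal_pos (hpos k hk).ne' (hfin k)
    have hple1 : ∀ k, p k ≤ 1 := fun k => by
      simpa using ENNReal.toReal_mono (by simp) (hle1 k)
    set u : ℕ → ℝ := fun k => if k = 0 then 0 else -Real.log (p k) with hu
    have hunonneg : ∀ k, 0 ≤ u k := by
      intro k
      rcases Nat.eq_zero_or_pos k with h | h
      · simp [hu, h]
      · simp only [hu, if_neg h.ne']
        have := Real.log_nonpos (le_of_lt (hppos k h)) (hple1 k)
        linarith
    have hsub : Subadditive u := by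
      intro a b
      rcases Nat.eq_zero_or_pos a with ha | ha
      · simp [hu, ha]
      rcases Nat.eq_zero_or_pos b with hb | hb
      · simp [hu, hb]
      have hab : a + b ≠ 0 := by omega
      simp only [hu, if_neg ha.ne', if_neg hb.ne', if_neg hab]
      have hqab : p a * p b ≤ p (a + b) := by
        have := ENNReal.toReal_mono (hfin (a + b)) (hsuper a b)
        rwa [ENNReal.toReal_mul] at this
      have hprodpos : 0 < p a * p b := mul_pos (hppos a ha) (hppos b hb)
      have hlog := Real.log_le_log hprodpos hqab
      rw [Real.log_mul (hppos a ha).ne' (hppos b hb).ne'] at hlog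
      linarith
    have hbdd : BddBelow (Set.range fun n : ℕ => u n / n) := by
      refine ⟨0, ?_⟩
      rintro y ⟨n, rfl⟩
      exact div_nonneg (hunonneg n) (Nat.cast_nonneg n)
    have htends := hsub.tendsto_lim hbdd
    set L := hsub.lim with hL
    have hkey : ∀ n : ℕ, 1 ≤ n → (((n : ℝ)⁻¹ : ℝ) : EReal) *
        ENNReal.log (μ {ω | x ≤ empMean X n ω}) = ((-(u n / n) : ℝ) : EReal) := by
      intro n hn
      rw [hset n hn]
      have hlogq : ENNReal.log (q n) = ((Real.log (p n) : ℝ) : EReal) :=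
        ENNReal.log_pos_real' (hppos n hn)
      show (((n : ℝ)⁻¹ : ℝ) : EReal) * ENNReal.log (q n) = _
      rw [hlogq, ← EReal.coe_mul]
      congr 1
      simp only [hu, if_neg (by omega : n ≠ 0)]
      field_simp
    -- nonempty index type
    haveI : Nonempty {n : ℕ // 1 ≤ n} := ⟨⟨1, le_refl 1⟩⟩
    have hent : entropy μ X x = ((-L : ℝ) : EReal) := by
      have e1 : entropy μ X x = ⨆ n : ℕ, ⨆ _ : 1 ≤ n, ((-(u n / n) : ℝ) : EReal) := by
        refine iSup_congr fun n => ?_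
        by_cases hn : 1 ≤ n
        · rw [iSup_pos hn, iSup_pos hn]
          exact hkey n hn
        · rw [iSup_neg hn, iSup_neg hn]
      have e2 : (⨆ n : ℕ, ⨆ _ : 1 ≤ n, ((-(u n / n) : ℝ) : EReal)) =
          ⨆ np : {n : ℕ // 1 ≤ n}, ((-(u np / np) : ℝ) : EReal) := iSup_subtype'
      have hbad : BddAbove (Set.range fun np : {n : ℕ // 1 ≤ n} => -(u np / np)) := by
        refine ⟨0, ?_⟩
        rintro y ⟨np, rfl⟩
        simp only [neg_nonpos]
        exact div_nonneg (hunonneg np) (Nat.cast_nonneg _)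
      have e3 : (⨆ np : {n : ℕ // 1 ≤ n}, ((-(u np / np) : ℝ) : EReal)) =
          (((⨆ np : {n : ℕ // 1 ≤ n}, -(u np / np)) : ℝ) : EReal) :=
        (Monotone.map_ciSup_of_continuousAt
          (continuous_coe_real_ereal.continuousAt) EReal.coe_strictMono.monotone hbad).symm
      have e4 : (⨆ np : {n : ℕ // 1 ≤ n}, -(u np / np)) = -L := by
        have hglb : IsGLB ((fun n : ℕ => u n / n) '' Set.Ici 1) L := by
          rw [hL, Subadditive.lim]
          refine isGLB_csInf ⟨u 1 / 1, ⟨1, Set.mem_Ici.2 le_rfl, by norm_num⟩⟩ ⟨0, ?_⟩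
          rintro y ⟨n, _, rfl⟩
          exact div_nonneg (hunonneg n) (Nat.cast_nonneg n)
        have hlub := hglb.neg
        have hrange : Set.range (fun np : {n : ℕ // 1 ≤ n} => -(u np / np)) =
            -((fun n : ℕ => u n / n) '' Set.Ici 1) := by
          ext y
          simp only [Set.mem_range, Set.mem_neg, Set.mem_image, Set.mem_Ici]
          constructor
          · rintro ⟨⟨n, hn⟩, rfl⟩
            exact ⟨n, hn, by ring⟩
          · rintro ⟨n, hn, hy⟩
            exact ⟨⟨n, hn⟩, by simp only; linarith⟩
        exact IsLUB.ciSup_eq (by rw [hrange]; exact hlub)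
      rw [e1, e2, e3, e4]
    rw [hent]
    have hlim : Tendsto (fun n : ℕ => ((-(u n / n) : ℝ) : EReal)) atTop (𝓝 ((-L : ℝ) : EReal)) :=
      EReal.tendsto_coe.2 htends.neg
    refine Tendsto.congr' ?_ hlim
    filter_upwards [eventually_ge_atTop 1] with n hn
    exact (hkey n hn).symm
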